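/- Let A be a matrix over Z_m. Then the subgroup of Z_m^{(rows)} generated by the rows of A is isomorphic to the subgroup generated by the columns of A; in particular the row rank and column rank of A coincide. -/

import Mathlib

open Finset

/-- The rank of an additive abelian group: the minimal `r` such that it is isomorphic
to a product of `r` cyclic groups. -/
noncomputable def groupRank (G : Type*) [AddCommGroup G] : ℕ :=
  sInf {r : ℕ | ∃ c : Fin r → ℕ, Nonempty (G ≃+ ((i : Fin r) → ZMod (c i)))}

/-- The subgroup of `ZMod m ^ k` generated by the columns of a matrix. -/
def colSpan {m k l : ℕ} (A : Matrix (Fin k) (Fin l) (ZMod m)) :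
    AddSubgroup (Fin k → ZMod m) :=
  AddSubgroup.closure (Set.range fun j i => A i j)

/-- The rank of a matrix over `ZMod m`: the rank of its column space. -/
noncomputable def matrixRank {m k l : ℕ} (A : Matrix (Fin k) (Fin l) (ZMod m)) : ℕ :=
  groupRank (colSpan A)

/-! ### Auxiliary development -/

open Matrix
open Module

/-- Componentwise reduction mod `m`. -/
def piCastHom (m q : ℕ) : (Fin q → ℤ) →+ (Fin q → ZMod m) :=
  AddMonoidHom.mk' (fun x i => ((x i : ℤ) : ZMod m)) (by
    intro x y; funext i; simp [Pi.add_apply])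

@[simp] lemma piCastHom_apply (m q : ℕ) (x : Fin q → ℤ) (i : Fin q) :
    piCastHom m q x i = ((x i : ℤ) : ZMod m) := rfl

lemma exists_smul_iff_dvd_repr (m : ℤ) {q : ℕ}
    {ι : Type*} [Fintype ι] (γ : Basis ι ℤ (Fin q → ℤ)) (y : Fin q → ℤ) :
    (∃ z, y = m • z) ↔ ∀ i, m ∣ γ.repr y i := by
  classical
  constructor
  · rintro ⟨z, rfl⟩ i
    rw [γ.repr.map_smul]
    exact ⟨γ.repr z i, rfl⟩
  · intro hdvd
    refine ⟨∑ j, (γ.repr y j / m) • γ j, ?_⟩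
    apply γ.repr.injective
    ext i
    rw [γ.repr.map_smul, map_sum, Finsupp.smul_apply, Finsupp.finset_sum_apply]
    have hterm : ∀ j, γ.repr ((γ.repr y j / m) • γ j) i
        = (γ.repr y j / m) * (if j = i then 1 else 0) := by
      intro j
      rw [γ.repr.map_smul, Finsupp.smul_apply, Basis.repr_self, Finsupp.single_apply,
        smul_eq_mul]
    rw [Finset.sum_congr rfl fun j _ => hterm j]
    simp only [mul_ite, mul_one, mul_zero, Finset.sum_ite_eq' Finset.univ i, Finset.mem_univ,
      if_true]
    rw [smul_eq_mul, Int.mul_ediv_cancel' (hdvd i)]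

noncomputable def dualBasisPi {q : ℕ} {κ : Type*} [Fintype κ] [DecidableEq κ]
    (β : Basis κ ℤ (Fin q → ℤ)) : Basis κ ℤ (Fin q → ℤ) :=
  β.dualBasis.map (Pi.basisFun ℤ (Fin q)).toDualEquiv.symm

lemma dualBasisPi_repr {q : ℕ} {κ : Type*} [Fintype κ] [DecidableEq κ]
    (β : Basis κ ℤ (Fin q → ℤ)) (y : Fin q → ℤ) (j : κ) :
    (dualBasisPi β).repr y j = β j ⬝ᵥ y := by
  rw [dualBasisPi, Basis.map_repr]
  simp only [LinearEquiv.symm_symm, LinearEquiv.trans_apply, Basis.dualBasis_repr]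
  have hb : β j = ∑ c, β j c • (Pi.basisFun ℤ (Fin q)) c := by
    conv_lhs => rw [← (Pi.basisFun ℤ (Fin q)).sum_repr (β j)]
    simp [Pi.basisFun_repr]
  rw [Basis.toDualEquiv_apply]
  conv_lhs => rw [hb]
  rw [map_sum]
  have hterm : ∀ c, ((Pi.basisFun ℤ (Fin q)).toDual y) (β j c • (Pi.basisFun ℤ (Fin q)) c)
      = β j c * y c := by
    intro c
    rw [((Pi.basisFun ℤ (Fin q)).toDual y).map_smul, Basis.toDual_eq_repr, Pi.basisFun_repr,
      smul_eq_mul]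
  rw [Finset.sum_congr rfl fun c _ => hterm c]
  rfl

/-- The main computation: if the map is diagonal with respect to suitable bases,
its range mod `m` is a product of cyclic groups generated by the diagonal entries. -/
lemma rangeEquivOfDiag (m : ℕ) {q r n : ℕ} {κ ι : Type*} [Fintype κ] [Fintype ι]
    (T : (Fin q → ℤ) →ₗ[ℤ] (Fin r → ℤ))
    (β : Basis κ ℤ (Fin q → ℤ)) (γ : Basis ι ℤ (Fin r → ℤ))
    (g : Fin n ↪ κ) (h : Fin n ↪ ι) (a : Fin n → ℤ)
    (h1 : ∀ i x, γ.repr (T x) (h i) = a i * β.repr x (g i))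
    (h2 : ∀ c ∉ Set.range h, ∀ x, γ.repr (T x) c = 0) :
    Nonempty ((((piCastHom m r).comp T.toAddMonoidHom).range : AddSubgroup _) ≃+
      ∀ i : Fin n, AddSubgroup.zmultiples ((a i : ZMod m))) := by
  classical
  set ψ := (piCastHom m r).comp T.toAddMonoidHom with hψdef
  have hmem : ∀ (i : Fin n) (c : ℤ),
      ((a i * c : ℤ) : ZMod m) ∈ AddSubgroup.zmultiples ((a i : ZMod m)) := by
    intro i c
    refine AddSubgroup.mem_zmultiples_iff.mpr ⟨c, ?_⟩
    rw [zsmul_eq_mul]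
    push_cast
    ring
  set Φ : (Fin q → ℤ) →+ (∀ i : Fin n, AddSubgroup.zmultiples ((a i : ZMod m))) :=
    AddMonoidHom.mk' (fun x i => ⟨((a i * β.repr x (g i) : ℤ) : ZMod m), hmem i _⟩)
      (by
        intro x y
        funext i
        apply Subtype.ext
        show ((a i * β.repr (x + y) (g i) : ℤ) : ZMod m)
          = ((a i * β.repr x (g i) : ℤ) : ZMod m) + ((a i * β.repr y (g i) : ℤ) : ZMod m)
        rw [map_add, Finsupp.add_apply]
        push_cast
        ring) with hΦdef
  have hΦapp : ∀ x i, (Φ x i : ZMod m) = ((a i * β.repr x (g i) : ℤ) : ZMod m) := fun x i => rfl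
  have e1 : ∀ x, (∀ c, (m : ℤ) ∣ T x c) ↔ ∀ c, (m : ℤ) ∣ γ.repr (T x) c := by
    intro x
    constructor
    · intro hc
      refine (exists_smul_iff_dvd_repr _ γ _).mp ?_
      refine (exists_smul_iff_dvd_repr (m : ℤ) (Pi.basisFun ℤ (Fin r)) (T x)).mpr ?_
      simpa [Pi.basisFun_repr] using hc
    · intro hc
      have h3 := (exists_smul_iff_dvd_repr (m : ℤ) (Pi.basisFun ℤ (Fin r)) (T x)).mp
        ((exists_smul_iff_dvd_repr _ γ _).mpr hc)
      simpa [Pi.basisFun_repr] using h3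
  have hker : ψ.ker = Φ.ker := by
    ext x
    simp only [AddMonoidHom.mem_ker]
    constructor
    · intro h0
      have hdvd : ∀ c, (m : ℤ) ∣ γ.repr (T x) c := by
        refine (e1 x).mp fun c => ?_
        have := congrFun h0 c
        exact (ZMod.intCast_zmod_eq_zero_iff_dvd _ m).mp this
      funext i
      apply Subtype.ext
      rw [hΦapp]
      show _ = (0 : ZMod m)
      refine (ZMod.intCast_zmod_eq_zero_iff_dvd _ m).mpr ?_
      have := hdvd (h i)
      rwa [h1 i x] at this
    · intro h0
      have hi : ∀ i, (m : ℤ) ∣ a i * β.repr x (g i) := by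
        intro i
        have := congrArg Subtype.val (congrFun h0 i)
        rw [hΦapp] at this
        exact (ZMod.intCast_zmod_eq_zero_iff_dvd _ m).mp this
      have hdvd : ∀ c, (m : ℤ) ∣ γ.repr (T x) c := by
        intro c
        by_cases hc : c ∈ Set.range h
        · obtain ⟨i, rfl⟩ := hc
          rw [h1]
          exact hi i
        · rw [h2 c hc]
          exact dvd_zero _
      have hgood := (e1 x).mpr hdvd
      funext c
      exact (ZMod.intCast_zmod_eq_zero_iff_dvd _ m).mpr (hgood c)
  have hsurj : Function.Surjective Φ := by
    intro z
    have hz : ∀ i, ∃ c : ℤ, c • ((a i : ZMod m)) = (z i : ZMod m) := fun i =>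
      AddSubgroup.mem_zmultiples_iff.mp (z i).2
    choose c hc using hz
    refine ⟨∑ j, c j • β (g j), ?_⟩
    funext i
    apply Subtype.ext
    rw [hΦapp]
    have hrepr : β.repr (∑ j, c j • β (g j)) (g i) = c i := by
      rw [map_sum, Finsupp.finset_sum_apply]
      have hterm : ∀ j, β.repr (c j • β (g j)) (g i) = c j * (if j = i then 1 else 0) := by
        intro j
        rw [β.repr.map_smul, Finsupp.smul_apply, Basis.repr_self, Finsupp.single_apply,
          smul_eq_mul]
        simp [g.injective.eq_iff]
      rw [Finset.sum_congr rfl fun j _ => hterm j]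
      simp [Finset.sum_ite_eq' Finset.univ i]
    rw [hrepr, ← hc i, zsmul_eq_mul]
    push_cast
    ring
  exact ⟨(QuotientAddGroup.quotientKerEquivRange ψ).symm.trans
    ((QuotientAddGroup.quotientAddEquivOfEq hker).trans
      ((QuotientAddGroup.quotientKerEquivRange Φ).trans
        ((AddEquiv.addSubgroupCongr (AddMonoidHom.range_eq_top_of_surjective Φ hsurj)).trans
          AddSubgroup.topEquiv)))⟩

lemma repr_diag_of_basis {q r n : ℕ} {κ ι : Type*} [Fintype κ] [DecidableEq κ] [DecidableEq ι]
    (T : (Fin q → ℤ) →ₗ[ℤ] (Fin r → ℤ))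
    (β : Basis κ ℤ (Fin q → ℤ)) (γ : Basis ι ℤ (Fin r → ℤ))
    (g : Fin n ↪ κ) (h : Fin n ↪ ι) (a : Fin n → ℤ)
    (hg : ∀ i, T (β (g i)) = a i • γ (h i))
    (hg0 : ∀ j ∉ Set.range g, T (β j) = 0) :
    (∀ i x, γ.repr (T x) (h i) = a i * β.repr x (g i)) ∧
      ∀ c ∉ Set.range h, ∀ x, γ.repr (T x) c = 0 := by
  have key : ∀ (x : Fin q → ℤ) (c : ι), γ.repr (T x) c
      = ∑ i : Fin n, β.repr x (g i) * a i * (if h i = c then 1 else 0) := by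
    intro x c
    have hx : T x = ∑ j : κ, β.repr x j • T (β j) := by
      conv_lhs => rw [← β.sum_repr x]
      rw [map_sum]
      exact Finset.sum_congr rfl fun j _ => T.map_smul _ _
    have hzero : ∀ j ∈ Finset.univ, j ∉ Finset.univ.map g →
        γ.repr (β.repr x j • T (β j)) c = 0 := by
      intro j _ hj
      have hjr : j ∉ Set.range g := by
        rintro ⟨i, hi⟩
        exact hj (Finset.mem_map.mpr ⟨i, Finset.mem_univ i, hi⟩)
      rw [hg0 j hjr, smul_zero, map_zero, Finsupp.coe_zero, Pi.zero_apply]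
    rw [hx, map_sum, Finsupp.finset_sum_apply,
      ← Finset.sum_subset (Finset.subset_univ (Finset.univ.map g)) hzero, Finset.sum_map]
    refine Finset.sum_congr rfl fun i _ => ?_
    rw [hg i, γ.repr.map_smul, Finsupp.smul_apply, γ.repr.map_smul, Finsupp.smul_apply,
      Basis.repr_self, Finsupp.single_apply, smul_eq_mul, smul_eq_mul]
    ring
  constructor
  · intro i x
    rw [key]
    simp only [EmbeddingLike.apply_eq_iff_eq, mul_ite, mul_one, mul_zero,
      Finset.sum_ite_eq' Finset.univ i, Finset.mem_univ, if_true]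
    ring
  · intro c hc x
    rw [key]
    refine Finset.sum_eq_zero fun i _ => ?_
    have hne : h i ≠ c := fun hic => hc ⟨i, hic⟩
    simp [hne]

/-- Smith-normal-form data for an integer matrix, with the conclusion packaged as needed:
both the reduction of the matrix and of its transpose have ranges isomorphic to the same
product of cyclic groups. -/
lemma exists_diag_data (k l : ℕ) (B : Matrix (Fin k) (Fin l) ℤ) :
    ∃ (n : ℕ) (a : Fin n → ℤ), ∀ m : ℕ,
      Nonempty ((((piCastHom m k).comp B.mulVecLin.toAddMonoidHom).range : AddSubgroup _) ≃+
        ∀ i : Fin n, AddSubgroup.zmultiples ((a i : ZMod m))) ∧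
      Nonempty ((((piCastHom m l).comp B.transpose.mulVecLin.toAddMonoidHom).range :
          AddSubgroup _) ≃+
        ∀ i : Fin n, AddSubgroup.zmultiples ((a i : ZMod m))) := by
  classical
  set T := B.mulVecLin with hTdef
  obtain ⟨n, w, bN, fι, a, hsnf⟩ := (LinearMap.range T).smithNormalForm (Pi.basisFun ℤ (Fin k))
  choose sv hsv using fun i => LinearMap.mem_range.mp (bN i).2
  set s : (LinearMap.range T : Submodule ℤ (Fin k → ℤ)) →ₗ[ℤ] (Fin l → ℤ) :=
    bN.constr ℤ sv with hsdef
  have hs : ∀ z : LinearMap.range T, T (s z) = (z : Fin k → ℤ) := by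
    have hcomp : T.comp s = (LinearMap.range T).subtype := by
      apply Basis.ext bN
      intro i
      rw [LinearMap.comp_apply, hsdef, Basis.constr_basis]
      exact (hsv i).trans rfl
    intro z
    have := congrArg (fun f => f z) hcomp
    simpa using this
  obtain ⟨p, bK⟩ := (LinearMap.ker T).basisOfPid (Pi.basisFun ℤ (Fin l))
  set F : (Fin l → ℤ) →ₗ[ℤ] ↥(LinearMap.range T) × ↥(LinearMap.ker T) :=
    LinearMap.prod T.rangeRestrict
      ((LinearMap.id - s.comp T.rangeRestrict).codRestrict (LinearMap.ker T) (by
        intro x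
        have hx : T (x - s (T.rangeRestrict x)) = 0 := by
          rw [map_sub, hs (T.rangeRestrict x)]
          rw [LinearMap.codRestrict_apply]
          exact sub_self _
        exact LinearMap.mem_ker.mpr hx)) with hFdef
  set G : (↥(LinearMap.range T) × ↥(LinearMap.ker T)) →ₗ[ℤ] (Fin l → ℤ) :=
    s.comp (LinearMap.fst ℤ _ _) + (LinearMap.ker T).subtype.comp (LinearMap.snd ℤ _ _)
    with hGdef
  have hGF : G.comp F = LinearMap.id := by
    apply LinearMap.ext
    intro x
    show s (T.rangeRestrict x) + (x - s (T.rangeRestrict x)) = x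
    abel
  have hFG : F.comp G = LinearMap.id := by
    apply LinearMap.ext
    rintro ⟨z, qq⟩
    have hTy : T (s z + (qq : Fin l → ℤ)) = (z : Fin k → ℤ) := by
      rw [map_add, hs z, LinearMap.mem_ker.mp qq.2, add_zero]
    have hfst : T.rangeRestrict (s z + (qq : Fin l → ℤ)) = z := by
      apply Subtype.ext
      rw [LinearMap.codRestrict_apply]
      exact hTy
    show (T.rangeRestrict (s z + (qq : Fin l → ℤ)),
        (⟨s z + (qq : Fin l → ℤ) - s (T.rangeRestrict (s z + (qq : Fin l → ℤ))), _⟩ :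
          LinearMap.ker T)) = (z, qq)
    refine Prod.ext hfst ?_
    apply Subtype.ext
    show s z + (qq : Fin l → ℤ) - s (T.rangeRestrict (s z + (qq : Fin l → ℤ)))
      = (qq : Fin l → ℤ)
    rw [hfst]
    abel
  set e := LinearEquiv.ofLinear G F hGF hFG with hedef
  set u : Basis (Fin n ⊕ Fin p) ℤ (Fin l → ℤ) := (bN.prod bK).map e with hudef
  have hTe : ∀ (z : LinearMap.range T) (qq : LinearMap.ker T),
      T (e (z, qq)) = (z : Fin k → ℤ) := by
    intro z qq
    rw [hedef, LinearEquiv.ofLinear_apply]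
    show T (s z + (qq : Fin l → ℤ)) = (z : Fin k → ℤ)
    rw [map_add, hs z, LinearMap.mem_ker.mp qq.2, add_zero]
  have hprodl : ∀ i, (bN.prod bK) (Sum.inl i) = (bN i, 0) := by
    intro i
    exact Prod.ext (Basis.prod_apply_inl_fst bN bK i) (Basis.prod_apply_inl_snd bN bK i)
  have hprodr : ∀ j, (bN.prod bK) (Sum.inr j) = (0, bK j) := by
    intro j
    exact Prod.ext (Basis.prod_apply_inr_fst bN bK j) (Basis.prod_apply_inr_snd bN bK j)
  have hu1 : ∀ i, T (u (Sum.inl i)) = a i • w (fι i) := by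
    intro i
    rw [hudef, Basis.map_apply, hprodl i, hTe]
    exact hsnf i
  have hu2 : ∀ j, T (u (Sum.inr j)) = 0 := by
    intro j
    rw [hudef, Basis.map_apply, hprodr j, hTe]
    rfl
  set gemb : Fin n ↪ (Fin n ⊕ Fin p) := ⟨Sum.inl, Sum.inl_injective⟩ with hgembdef
  have hg0 : ∀ j ∉ Set.range gemb, T (u j) = 0 := by
    rintro (i | j) hj
    · exact absurd ⟨i, rfl⟩ hj
    · exact hu2 j
  obtain ⟨hd1, hd2⟩ := repr_diag_of_basis T u w gemb fι a (fun i => hu1 i) hg0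
  have hg0' : ∀ (y : Fin k → ℤ) (c : Fin n ⊕ Fin p), c ∉ Set.range gemb →
      (dualBasisPi u).repr (B.transpose.mulVecLin y) c = 0 := by
    intro y c hc
    rw [dualBasisPi_repr, Matrix.mulVecLin_apply, Matrix.dotProduct_mulVec,
      Matrix.vecMul_transpose]
    have hz : B *ᵥ u c = 0 := by
      have := hg0 c hc
      rwa [hTdef, Matrix.mulVecLin_apply] at this
    rw [hz, zero_dotProduct]
  have hd1' : ∀ (i : Fin n) (y : Fin k → ℤ),
      (dualBasisPi u).repr (B.transpose.mulVecLin y) (gemb i)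
        = a i * (dualBasisPi w).repr y (fι i) := by
    intro i y
    rw [dualBasisPi_repr, dualBasisPi_repr, Matrix.mulVecLin_apply, Matrix.dotProduct_mulVec,
      Matrix.vecMul_transpose]
    have hz : B *ᵥ u (gemb i) = a i • w (fι i) := by
      have := hu1 i
      rwa [hTdef, Matrix.mulVecLin_apply] at this
    rw [hz, smul_dotProduct, smul_eq_mul]
  refine ⟨n, a, fun m => ⟨?_, ?_⟩⟩
  · exact rangeEquivOfDiag m T u w gemb fι a hd1 hd2
  · exact rangeEquivOfDiag m B.transpose.mulVecLin (dualBasisPi w) (dualBasisPi u)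
      fι gemb a hd1' (fun c hc y => hg0' y c hc)

lemma colSpan_eq_range {m k l : ℕ} (A : Matrix (Fin k) (Fin l) (ZMod m))
    (B : Matrix (Fin k) (Fin l) ℤ) (hB : ∀ i j, ((B i j : ℤ) : ZMod m) = A i j) :
    colSpan A = ((piCastHom m k).comp B.mulVecLin.toAddMonoidHom).range := by
  have h1 : (B.mulVecLin.toAddMonoidHom).range
      = (Submodule.span ℤ (Set.range B.transpose)).toAddSubgroup := by
    rw [show Set.range B.transpose = Set.range B.col from rfl, ← Matrix.range_mulVecLin]
    ext x
    simp [AddMonoidHom.mem_range, LinearMap.mem_range]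
  have hfun : (⇑(piCastHom m k) ∘ B.transpose) = fun j i => A i j := by
    funext j i
    exact hB i j
  rw [AddMonoidHom.range_comp, h1, Submodule.span_int_eq_addSubgroupClosure,
    AddMonoidHom.map_closure,
    show ⇑(piCastHom m k) '' Set.range Bᵀ = Set.range (fun j i => A i j) from by
      rw [← hfun]; exact (Set.range_comp _ _).symm]
  rfl

lemma groupRank_congr {G H : Type*} [AddCommGroup G] [AddCommGroup H] (e : G ≃+ H) :
    groupRank G = groupRank H := by
  unfold groupRank
  congr 1
  ext r
  constructor
  · rintro ⟨c, ⟨f⟩⟩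
    exact ⟨c, ⟨e.symm.trans f⟩⟩
  · rintro ⟨c, ⟨f⟩⟩
    exact ⟨c, ⟨e.trans f⟩⟩

theorem rowSpan_iso_colSpan (m k l : ℕ) (A : Matrix (Fin k) (Fin l) (ZMod m)) :
    Nonempty ((colSpan A.transpose) ≃+ (colSpan A)) ∧
      matrixRank A.transpose = matrixRank A := by
  classical
  set B : Matrix (Fin k) (Fin l) ℤ := fun i j => (ZMod.cast (A i j) : ℤ) with hBdef
  have hB : ∀ i j, ((B i j : ℤ) : ZMod m) = A i j := fun i j => ZMod.intCast_zmod_cast _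
  have hBT : ∀ j i, ((B.transpose j i : ℤ) : ZMod m) = A.transpose j i := fun j i => hB i j
  obtain ⟨n, a, hma⟩ := exists_diag_data k l B
  obtain ⟨⟨e1⟩, ⟨e2⟩⟩ := hma m
  have hc1 : colSpan A = ((piCastHom m k).comp B.mulVecLin.toAddMonoidHom).range :=
    colSpan_eq_range A B hB
  have hc2 : colSpan A.transpose
      = ((piCastHom m l).comp B.transpose.mulVecLin.toAddMonoidHom).range :=
    colSpan_eq_range A.transpose B.transpose hBT
  have iso : (colSpan A.transpose) ≃+ (colSpan A) :=
    ((AddEquiv.addSubgroupCongr hc2).trans e2).trans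
      (e1.symm.trans (AddEquiv.addSubgroupCongr hc1.symm))
  exact ⟨⟨iso⟩, groupRank_congr iso⟩
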